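/- Suppose $X$ is a $d$-tuple of $n\times n$ matrices and $Y$ is a $d$-tuple of $m\times m$ matrices, each jointly similar to a strict row contraction. Then for any $d$-tuple $Z$ of $n\times m$ matrices, the block upper triangular $d$-tuple with diagonal blocks $X$ and $Y$ and off-diagonal block $Z$, i.e., $\left(\begin{bmatrix} X_j & Z_j \\ 0 & Y_j \end{bmatrix}\right)_{j=1}^d$, is jointly similar to a strict row contraction. -/

import Mathlib

open scoped Matrix ComplexOrder

open Matrix in
private lemma srcAux_fromBlocks_sum {ι α q r : Type*} [AddCommMonoid α] (s : Finset ι)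
    (f : ι → Matrix q q α) (g : ι → Matrix q r α) (h : ι → Matrix r q α)
    (k : ι → Matrix r r α) :
    ∑ j ∈ s, fromBlocks (f j) (g j) (h j) (k j)
      = fromBlocks (∑ j ∈ s, f j) (∑ j ∈ s, g j) (∑ j ∈ s, h j) (∑ j ∈ s, k j) := by
  ext (i | i) (j | j) <;>
    simp [Matrix.sum_apply, Matrix.fromBlocks_apply₁₁, Matrix.fromBlocks_apply₁₂,
      Matrix.fromBlocks_apply₂₁, Matrix.fromBlocks_apply₂₂]

/-- A `d`-tuple of square matrices is jointly similar to a strict row contraction. -/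
def SimilarToStrictRowContraction {d : ℕ} {N : Type*} [Fintype N] [DecidableEq N]
    (X : Fin d → Matrix N N ℂ) : Prop :=
  ∃ S : Matrix N N ℂ, IsUnit S ∧
    (1 - ∑ j, (S⁻¹ * X j * S) * (S⁻¹ * X j * S)ᴴ).PosDef

open Matrix

section MainProof

variable {k : Type*} [Fintype k] [DecidableEq k]

set_option linter.unusedSectionVars false in
private lemma srcAux_posSemidef_sum {ι : Type*} (s : Finset ι) (f : ι → Matrix k k ℂ)
    (hf : ∀ j ∈ s, (f j).PosSemidef) : (∑ j ∈ s, f j).PosSemidef :=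
  Finset.sum_induction f _ (fun _ _ ha hb => ha.add hb) Matrix.PosSemidef.zero hf

private lemma srcAux_posDef_conj {M B : Matrix k k ℂ} (hM : M.PosDef) (hB : IsUnit B) :
    (Bᴴ * M * B).PosDef := by
  refine PosDef.of_dotProduct_mulVec_pos (isHermitian_conjTranspose_mul_mul B hM.1) fun x hx => ?_
  have hBx : B *ᵥ x ≠ 0 := by
    intro h
    exact hx (mulVec_injective_iff_isUnit.2 hB (by simpa using h))
  simpa only [star_mulVec, dotProduct_mulVec, vecMul_vecMul] using hM.dotProduct_mulVec_pos hBx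

set_option linter.unusedSectionVars false in
private lemma srcAux_one_sub_smul {N : Matrix k k ℂ} (hN : N.PosSemidef) :
    ∃ ε : ℝ, 0 < ε ∧ (1 - (ε : ℂ) • N).PosDef := by
  set c : ℝ := ∑ i, ∑ j, ‖N i j‖ with hc
  have hc0 : 0 ≤ c :=
    Finset.sum_nonneg fun _ _ => Finset.sum_nonneg fun _ _ => norm_nonneg _
  refine ⟨1 / (c + 1), by positivity, ?_⟩
  refine PosDef.of_dotProduct_mulVec_pos ?_ ?_
  · simp [Matrix.IsHermitian, conjTranspose_sub, conjTranspose_smul, hN.1.eq, Complex.conj_ofReal]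
  · intro x hx
    set S : ℝ := ∑ i, ‖x i‖ ^ 2 with hSdef
    have hS : 0 < S := by
      obtain ⟨i, hi⟩ := Function.ne_iff.1 hx
      refine Finset.sum_pos' (fun _ _ => by positivity)
        ⟨i, Finset.mem_univ i, pow_pos (norm_pos_iff.2 hi) 2⟩
    set q : ℂ := dotProduct (star x) (N *ᵥ x) with hq
    have hq0 : 0 ≤ q := hN.dotProduct_mulVec_nonneg x
    have hqre : 0 ≤ q.re ∧ 0 = q.im := Complex.nonneg_iff.1 hq0
    have habs : ‖q‖ ≤ c * S := by
      have h1 : ‖q‖ ≤ ∑ i, ∑ j, ‖N i j‖ * S := by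
        calc ‖q‖ ≤ ∑ i, ‖star x i * (N *ᵥ x) i‖ := by
              rw [hq, dotProduct]; exact norm_sum_le _ _
          _ ≤ ∑ i, ∑ j, ‖N i j‖ * S := by
              refine Finset.sum_le_sum fun i _ => ?_
              have e1 : ‖star x i * (N *ᵥ x) i‖
                  ≤ ∑ j, ‖x i‖ * (‖N i j‖ * ‖x j‖) := by
                rw [norm_mul]
                calc ‖star x i‖ * ‖(N *ᵥ x) i‖
                    ≤ ‖star x i‖ * ∑ j, ‖N i j * x j‖ := by
                      refine mul_le_mul_of_nonneg_left ?_ (norm_nonneg _)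
                      rw [mulVec, dotProduct]
                      exact norm_sum_le _ _
                  _ = ∑ j, ‖x i‖ * (‖N i j‖ * ‖x j‖) := by
                      simp [Finset.mul_sum, norm_mul, Pi.star_apply,
                        Complex.norm_conj]
              refine e1.trans (Finset.sum_le_sum fun j _ => ?_)
              have hxi : ‖x i‖ ^ 2 ≤ S :=
                Finset.single_le_sum (f := fun i => ‖x i‖ ^ 2)
                  (fun _ _ => by positivity) (Finset.mem_univ i)
              have hxj : ‖x j‖ ^ 2 ≤ S :=
                Finset.single_le_sum (f := fun i => ‖x i‖ ^ 2)
                  (fun _ _ => by positivity) (Finset.mem_univ j)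
              have h2 : ‖x i‖ * ‖x j‖ ≤ S := by
                nlinarith [norm_nonneg (x i), norm_nonneg (x j)]
              calc ‖x i‖ * (‖N i j‖ * ‖x j‖)
                  = ‖N i j‖ * (‖x i‖ * ‖x j‖) := by ring
                _ ≤ ‖N i j‖ * S :=
                    mul_le_mul_of_nonneg_left h2 (norm_nonneg _)
      calc ‖q‖ ≤ ∑ i, ∑ j, ‖N i j‖ * S := h1
        _ = c * S := by rw [hc, Finset.sum_mul]
                        exact Finset.sum_congr rfl fun i _ => (Finset.sum_mul _ _ _).symm
    have hform : dotProduct (star x) ((1 - ((1 / (c + 1) : ℝ) : ℂ) • N) *ᵥ x)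
        = (S : ℂ) - ((1 / (c + 1) : ℝ) : ℂ) * q := by
      rw [sub_mulVec, dotProduct_sub, smul_mulVec, dotProduct_smul, one_mulVec,
        smul_eq_mul, hq]
      congr 1
      rw [dotProduct]
      push_cast [hSdef]
      refine Finset.sum_congr rfl fun i _ => ?_
      rw [Pi.star_apply, Complex.star_def, ← Complex.normSq_eq_conj_mul_self, ← Complex.sq_norm]
      push_cast
      ring
    rw [hform, Complex.lt_def]
    constructor
    · have hqle : q.re ≤ c * S := (Complex.re_le_norm q).trans habs
      simp only [Complex.sub_re, Complex.ofReal_re, Complex.mul_re, Complex.zero_re]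
      simp only [Complex.ofReal_im, zero_mul, sub_zero]
      have hlt : 1 / (c + 1) * q.re < S := by
        rcases hqre with ⟨h0, _⟩
        rw [div_mul_eq_mul_div, div_lt_iff₀ (by linarith)]
        nlinarith
      linarith [hlt]
    · simp only [Complex.sub_im, Complex.ofReal_im, Complex.mul_im, Complex.zero_im, ← hqre.2]
      norm_num

open scoped MatrixOrder in
private lemma srcAux_shrink {P N : Matrix k k ℂ} (hP : P.PosDef) (hN : N.PosSemidef) :
    ∃ ε : ℝ, 0 < ε ∧ (P - (ε : ℂ) • N).PosDef := by
  set L : Matrix k k ℂ := CFC.sqrt P with hLdef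
  have hLps : L.PosSemidef := (CFC.sqrt_nonneg P).posSemidef
  have hLmul : L * L = P := CFC.sqrt_mul_sqrt_self P hP.posSemidef.nonneg
  have hLunit : IsUnit L := by
    rw [Matrix.isUnit_iff_isUnit_det, isUnit_iff_ne_zero]
    intro h
    have : P.det = 0 := by rw [← hLmul, Matrix.det_mul, h, mul_zero]
    exact hP.det_pos.ne' this
  have hLH : Lᴴ = L := hLps.1
  have hLinvH : (L⁻¹)ᴴ = L⁻¹ := by rw [conjTranspose_nonsing_inv, hLH]
  have hN' : (L⁻¹ * N * L⁻¹).PosSemidef := by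
    have := hN.conjTranspose_mul_mul_same (L⁻¹)
    rwa [hLinvH] at this
  obtain ⟨ε, hε, hpd⟩ := srcAux_one_sub_smul hN'
  refine ⟨ε, hε, ?_⟩
  have key : P - (ε : ℂ) • N = Lᴴ * (1 - (ε : ℂ) • (L⁻¹ * N * L⁻¹)) * L := by
    rw [hLH]
    rw [Matrix.mul_sub, Matrix.sub_mul, Matrix.mul_one, hLmul]
    congr 1
    rw [Matrix.mul_smul, Matrix.smul_mul]
    congr 1
    symm
    calc L * (L⁻¹ * N * L⁻¹) * L = (L * L⁻¹) * N * (L⁻¹ * L) := by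
          simp only [Matrix.mul_assoc]
      _ = N := by rw [mul_nonsing_inv _ (isUnit_iff_isUnit_det _ |>.1 hLunit),
          nonsing_inv_mul _ (isUnit_iff_isUnit_det _ |>.1 hLunit), Matrix.one_mul,
          Matrix.mul_one]
  rw [key]
  exact srcAux_posDef_conj hpd hLunit

private lemma srcAux_posDef_fromBlocks₂₂ {q r : Type*} [Fintype q] [DecidableEq q] [Fintype r]
    [DecidableEq r] {A : Matrix q q ℂ} (B : Matrix q r ℂ) {D : Matrix r r ℂ}
    (hD : D.PosDef) (h : (A - B * D⁻¹ * Bᴴ).PosDef) :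
    (fromBlocks A B Bᴴ D).PosDef := by
  haveI : Invertible D := hD.isUnit.invertible
  refine PosDef.of_dotProduct_mulVec_pos ?_ ?_
  · exact (IsHermitian.fromBlocks₂₂ A B hD.1).2 h.1
  · intro z hz
    set x : q → ℂ := z ∘ Sum.inl with hxdef
    set y : r → ℂ := z ∘ Sum.inr with hydef
    have hzxy : Sum.elim x y = z := Sum.elim_comp_inl_inr z
    rw [← hzxy] at hz ⊢
    rw [dotProduct_mulVec, schur_complement_eq₂₂ A B x y hD.1]
    by_cases hx : x = 0
    · have hy : y ≠ 0 := by
        intro hy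
        exact hz (by rw [hx, hy]; ext (i | i) <;> simp)
      have h2 : star x ᵥ* (A - B * D⁻¹ * Bᴴ) ⬝ᵥ x = 0 := by
        rw [hx]; simp
      rw [h2, add_zero, hx]
      have h3 : (D⁻¹ * Bᴴ) *ᵥ (0 : q → ℂ) + y = y := by simp
      rw [h3, ← dotProduct_mulVec]
      exact hD.dotProduct_mulVec_pos hy
    · refine add_pos_of_nonneg_of_pos ?_ ?_
      · rw [← dotProduct_mulVec]
        exact hD.posSemidef.dotProduct_mulVec_nonneg _
      · rw [← dotProduct_mulVec]
        exact h.dotProduct_mulVec_pos hx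

end MainProof

/-- If `X` and `Y` are jointly similar to strict row contractions, then so is any block
upper triangular tuple with diagonal blocks `X, Y` and off-diagonal blocks `Z`. -/
theorem stmt_1 {d n m : ℕ} (X : Fin d → Matrix (Fin n) (Fin n) ℂ)
    (Y : Fin d → Matrix (Fin m) (Fin m) ℂ) (Z : Fin d → Matrix (Fin n) (Fin m) ℂ)
    (hX : SimilarToStrictRowContraction X) (hY : SimilarToStrictRowContraction Y) :
    SimilarToStrictRowContraction (fun j => Matrix.fromBlocks (X j) (Z j) 0 (Y j)) := by
  obtain ⟨S, hS, hP⟩ := hX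
  obtain ⟨T, hT, hQ⟩ := hY
  set A : Fin d → Matrix (Fin n) (Fin n) ℂ := fun j => S⁻¹ * X j * S with hA
  set B : Fin d → Matrix (Fin m) (Fin m) ℂ := fun j => T⁻¹ * Y j * T with hB
  set C : Fin d → Matrix (Fin n) (Fin m) ℂ := fun j => S⁻¹ * Z j * T with hC
  set P : Matrix (Fin n) (Fin n) ℂ := 1 - ∑ j, A j * (A j)ᴴ with hPdef
  set Q : Matrix (Fin m) (Fin m) ℂ := 1 - ∑ j, B j * (B j)ᴴ with hQdef
  set E : Matrix (Fin n) (Fin m) ℂ := ∑ j, C j * (B j)ᴴ with hE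
  set R : Matrix (Fin n) (Fin n) ℂ := ∑ j, C j * (C j)ᴴ with hR
  have hQinv : (Q⁻¹).PosDef := hQ.inv
  have hRps : R.PosSemidef :=
    srcAux_posSemidef_sum _ _ (fun j _ => posSemidef_self_mul_conjTranspose _)
  have hNps : (R + E * Q⁻¹ * Eᴴ).PosSemidef :=
    hRps.add (hQinv.posSemidef.mul_mul_conjTranspose_same E)
  obtain ⟨ε, hε, hPD⟩ := srcAux_shrink hP hNps
  set t : ℝ := Real.sqrt ε with htdef
  have ht : 0 < t := Real.sqrt_pos.2 hε
  have htt : (t : ℂ) * t = (ε : ℂ) := by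
    rw [← Complex.ofReal_mul, Real.mul_self_sqrt hε.le]
  have htne : (t : ℂ) ≠ 0 := by exact_mod_cast ht.ne'
  set W : Matrix (Fin n ⊕ Fin m) (Fin n ⊕ Fin m) ℂ :=
    fromBlocks S 0 0 ((t : ℂ) • T) with hW
  have hdetS := (Matrix.isUnit_iff_isUnit_det S).1 hS
  have hdetT := (Matrix.isUnit_iff_isUnit_det T).1 hT
  have hWunit : IsUnit W := by
    rw [Matrix.isUnit_iff_isUnit_det, hW, det_fromBlocks_zero₂₁, det_smul]
    exact hdetS.mul ((isUnit_iff_ne_zero.2 (pow_ne_zero _ htne)).mul hdetT)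
  have hWinv : W⁻¹ = fromBlocks S⁻¹ 0 0 ((t : ℂ)⁻¹ • T⁻¹) := by
    apply inv_eq_right_inv
    rw [hW, fromBlocks_multiply]
    simp only [Matrix.mul_zero, Matrix.zero_mul, add_zero, zero_add, Matrix.smul_mul,
      Matrix.mul_smul, smul_smul, smul_zero]
    rw [mul_nonsing_inv _ hdetS, mul_nonsing_inv _ hdetT, inv_mul_cancel₀ htne, one_smul,
      fromBlocks_one]
  refine ⟨W, hWunit, ?_⟩
  have hM : ∀ j, W⁻¹ * fromBlocks (X j) (Z j) 0 (Y j) * W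
      = fromBlocks (A j) ((t : ℂ) • C j) 0 (B j) := by
    intro j
    rw [hWinv, hW, fromBlocks_multiply, fromBlocks_multiply]
    simp only [Matrix.mul_zero, Matrix.zero_mul, add_zero, zero_add, Matrix.smul_mul,
      Matrix.mul_smul, smul_smul, smul_zero, inv_mul_cancel₀ htne, mul_inv_cancel₀ htne,
      one_smul, Matrix.mul_assoc, hA, hB, hC]
  have hMM : ∀ j, (fromBlocks (A j) ((t : ℂ) • C j) 0 (B j))
        * (fromBlocks (A j) ((t : ℂ) • C j) 0 (B j))ᴴ
      = fromBlocks (A j * (A j)ᴴ + (ε : ℂ) • (C j * (C j)ᴴ)) ((t : ℂ) • (C j * (B j)ᴴ))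
          ((t : ℂ) • (B j * (C j)ᴴ)) (B j * (B j)ᴴ) := by
    intro j
    rw [fromBlocks_conjTranspose, fromBlocks_multiply]
    simp only [conjTranspose_smul, conjTranspose_zero, Complex.star_def, Complex.conj_ofReal,
      Matrix.mul_zero, Matrix.zero_mul, add_zero, zero_add, Matrix.smul_mul, Matrix.mul_smul,
      smul_smul, smul_zero, htt]
  have key : (1 : Matrix (Fin n ⊕ Fin m) (Fin n ⊕ Fin m) ℂ)
        - ∑ j, (W⁻¹ * fromBlocks (X j) (Z j) 0 (Y j) * W)
          * (W⁻¹ * fromBlocks (X j) (Z j) 0 (Y j) * W)ᴴ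
      = fromBlocks (P - (ε : ℂ) • R) ((-(t : ℂ)) • E) (((-(t : ℂ)) • E)ᴴ) Q := by
    have e1 : ∀ j, (W⁻¹ * fromBlocks (X j) (Z j) 0 (Y j) * W)
          * (W⁻¹ * fromBlocks (X j) (Z j) 0 (Y j) * W)ᴴ
        = fromBlocks (A j * (A j)ᴴ + (ε : ℂ) • (C j * (C j)ᴴ)) ((t : ℂ) • (C j * (B j)ᴴ))
            ((t : ℂ) • (B j * (C j)ᴴ)) (B j * (B j)ᴴ) := fun j => by rw [hM j, hMM j]
    rw [Finset.sum_congr rfl (fun j _ => e1 j), srcAux_fromBlocks_sum, ← fromBlocks_one]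
    rw [Finset.sum_add_distrib, ← Finset.smul_sum, ← Finset.smul_sum, ← Finset.smul_sum]
    have hsub : ∀ (a₁₁ b₁₁ : Matrix (Fin n) (Fin n) ℂ) (a₁₂ b₁₂ : Matrix (Fin n) (Fin m) ℂ)
        (a₂₁ b₂₁ : Matrix (Fin m) (Fin n) ℂ) (a₂₂ b₂₂ : Matrix (Fin m) (Fin m) ℂ),
        fromBlocks a₁₁ a₁₂ a₂₁ a₂₂ - fromBlocks b₁₁ b₁₂ b₂₁ b₂₂
          = fromBlocks (a₁₁ - b₁₁) (a₁₂ - b₁₂) (a₂₁ - b₂₁) (a₂₂ - b₂₂) := by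
      intros
      rw [sub_eq_add_neg, fromBlocks_neg, fromBlocks_add]
      simp [sub_eq_add_neg]
    rw [hsub, hE, hQdef, hPdef, hR]
    simp only [zero_sub, neg_smul, conjTranspose_neg, conjTranspose_smul, conjTranspose_sum,
      conjTranspose_mul,
      conjTranspose_conjTranspose, Complex.star_def, star_neg, map_neg, Complex.conj_ofReal,
      sub_add_eq_sub_sub]
  rw [key]
  refine srcAux_posDef_fromBlocks₂₂ _ hQ ?_
  have e2 : (P - (ε : ℂ) • R) - ((-(t : ℂ)) • E) * Q⁻¹ * ((-(t : ℂ)) • E)ᴴ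
      = P - (ε : ℂ) • (R + E * Q⁻¹ * Eᴴ) := by
    rw [conjTranspose_smul, Complex.star_def, map_neg, Complex.conj_ofReal]
    rw [Matrix.smul_mul, Matrix.smul_mul, Matrix.mul_smul, smul_smul, neg_mul_neg, htt]
    rw [smul_add, sub_sub]
  rw [e2]
  exact hPD
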